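/- arXiv:0712.3837 — 3 statements merged into one kernel-verified Lean document; each statement's English description precedes it below -/
import Mathlib

section
/- Let N be a standard Poisson process and ε > 0, and define the Kac-Stroock kernel θ_ε(x) = ε^{-1} (-1)^{N(x/ε²)}. Then for any 0 ≤ x₁ ≤ y₁ ≤ x₂ ≤ y₂ ≤ ... ≤ xₙ ≤ yₙ (pairs ordered so that each pair {xᵢ, yᵢ} precedes {x_{i+1}, y_{i+1}}), E[∏_{i=1}^n θ_ε(xᵢ) θ_ε(yᵢ)] = ε^{-2n} exp(-2 ∑_{i=1}^n (yᵢ - xᵢ)/ε²). -/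
open MeasureTheory ProbabilityTheory

lemma aux_pair {M : Type*} [CommMonoid M] (c : ℕ → M) (n : ℕ) :
    ∏ k ∈ Finset.range (2 * n), c k
      = ∏ j ∈ Finset.range n, (c (2 * j) * c (2 * j + 1)) := by
  induction n with
  | zero => simp
  | succ n ih =>
    rw [Finset.prod_range_succ, ← ih, show 2 * (n + 1) = 2 * n + 1 + 1 by ring,
      Finset.prod_range_succ, Finset.prod_range_succ, mul_assoc]

lemma aux_integrable_prod {Ω ι : Type*} [MeasurableSpace Ω] (P : Measure Ω)
    [IsProbabilityMeasure P] (f : ι → Ω → ℝ)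
    (hmeas : ∀ i, Measurable (f i)) (hbd : ∀ i ω, |f i ω| ≤ 1) (s : Finset ι) :
    Integrable (fun ω => ∏ i ∈ s, f i ω) P := by
  classical
  refine Integrable.mono' (integrable_const 1)
    ((Finset.measurable_prod s (fun i _ => hmeas i)).aestronglyMeasurable)
    (ae_of_all _ fun ω => ?_)
  rw [Real.norm_eq_abs, Finset.abs_prod]
  calc ∏ i ∈ s, |f i ω| ≤ ∏ i ∈ s, 1 :=
        Finset.prod_le_prod (fun i _ => abs_nonneg _) (fun i _ => hbd i ω)
    _ = 1 := by simp

lemma aux_integral_prod {Ω ι : Type*} [MeasurableSpace Ω] (P : Measure Ω)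
    [IsProbabilityMeasure P] (f : ι → Ω → ℝ)
    (hindep : iIndepFun f P)
    (hmeas : ∀ i, Measurable (f i)) (hbd : ∀ i ω, |f i ω| ≤ 1) (s : Finset ι) :
    ∫ ω, ∏ i ∈ s, f i ω ∂P = ∏ i ∈ s, ∫ ω, f i ω ∂P := by
  classical
  induction s using Finset.induction_on with
  | empty => simp
  | insert a s hi ih =>
    rw [Finset.prod_insert hi, ← ih]
    have hIndep : IndepFun (f a) (fun ω => ∏ i ∈ s, f i ω) P := by
      have := (hindep.indepFun_finsetProd_of_notMem hmeas hi).symm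
      have heq : (∏ j ∈ s, f j) = fun ω => ∏ i ∈ s, f i ω := by
        funext ω; simp [Finset.prod_apply]
      rwa [heq] at this
    have hint : ∀ i, Integrable (f i) P := fun i =>
      Integrable.mono' (integrable_const 1) (hmeas i).aestronglyMeasurable
        (ae_of_all _ fun ω => by rw [Real.norm_eq_abs]; exact hbd i ω)
    have hmul := hIndep.integral_mul_eq_mul_integral (hint a).aestronglyMeasurable
      (aux_integrable_prod P f hmeas hbd s).aestronglyMeasurable
    simpa only [Pi.mul_apply] using by
      simpa [Finset.prod_insert hi] using hmul

lemma aux_poisson {Ω : Type*} [MeasurableSpace Ω] (P : Measure Ω) [IsProbabilityMeasure P]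
    (X : Ω → ℕ) (hX : Measurable X) (l : ℝ) (hl : 0 ≤ l)
    (hdist : ∀ k : ℕ, P {ω | X ω = k}
      = ENNReal.ofReal (Real.exp (-l) * l ^ k / (Nat.factorial k))) :
    ∫ ω, (-1 : ℝ) ^ X ω ∂P = Real.exp (-(2 * l)) := by
  have hgmeas : Measurable (fun k : ℕ => (-1 : ℝ) ^ k) := measurable_from_top
  have hmap : IsProbabilityMeasure (P.map X) := Measure.isProbabilityMeasure_map hX.aemeasurable
  have hgint : Integrable (fun k : ℕ => (-1 : ℝ) ^ k) (P.map X) := by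
    refine Integrable.mono' (integrable_const 1) hgmeas.aestronglyMeasurable
      (ae_of_all _ fun k => ?_)
    simp [abs_pow]
  rw [← integral_map hX.aemeasurable hgmeas.aestronglyMeasurable,
    integral_countable' hgint]
  have hpt : ∀ k : ℕ, (P.map X).real {k} • ((-1 : ℝ) ^ k)
      = Real.exp (-l) * ((-l) ^ k / (Nat.factorial k)) := by
    intro k
    rw [measureReal_def, Measure.map_apply hX (measurableSet_singleton k)]
    have : X ⁻¹' {k} = {ω | X ω = k} := rfl
    rw [this, hdist k, ENNReal.toReal_ofReal (by positivity)]
    rw [smul_eq_mul, neg_pow l k]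
    ring
  rw [tsum_congr hpt, tsum_mul_left]
  have : ∑' k : ℕ, (-l) ^ k / (Nat.factorial k : ℝ) = Real.exp (-l) := by
    rw [Real.exp_eq_exp_ℝ, NormedSpace.exp_eq_tsum_div]
  rw [this, ← Real.exp_add]
  ring_nf


/-- Kac–Stroock kernel: for a standard Poisson process `N` (independent increments and
Poisson-distributed increments), `θ_ε(x) = ε⁻¹ (-1)^{N(x/ε²)}`, and ordered points
`0 ≤ x₁ ≤ y₁ ≤ x₂ ≤ y₂ ≤ ⋯ ≤ xₙ ≤ yₙ`, one has
`E[∏ θ_ε(xᵢ) θ_ε(yᵢ)] = ε^{-2n} exp(-2 Σ (yᵢ - xᵢ)/ε²)`. -/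
theorem stmt_3 {Ω : Type*} [MeasurableSpace Ω] (P : Measure Ω) [IsProbabilityMeasure P]
    (N : ℝ → Ω → ℕ) (hNmeas : ∀ t, Measurable (N t))
    (hN0 : ∀ ω, N 0 ω = 0)
    (hNmono : ∀ ω, Monotone fun t => N t ω)
    (hNindep : ∀ (m : ℕ) (u : Fin (m + 1) → ℝ), Monotone u →
      iIndepFun
        (fun i : Fin m => fun ω => N (u i.succ) ω - N (u i.castSucc) ω) P)
    (hNdist : ∀ s t : ℝ, 0 ≤ s → s ≤ t → ∀ k : ℕ,
      P {ω | N t ω - N s ω = k}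
        = ENNReal.ofReal (Real.exp (-(t - s)) * (t - s) ^ k / (Nat.factorial k)))
    (ε : ℝ) (hε : 0 < ε)
    (θ : ℝ → Ω → ℝ) (hθ : ∀ x ω, θ x ω = ε⁻¹ * (-1 : ℝ) ^ N (x / ε ^ 2) ω)
    (n : ℕ) (x y : Fin n → ℝ)
    (hx0 : ∀ i, 0 ≤ x i) (hxy : ∀ i, x i ≤ y i)
    (hord : ∀ i : Fin n, ∀ h : (i : ℕ) + 1 < n, y i ≤ x ⟨(i : ℕ) + 1, h⟩) :
    ∫ ω, ∏ i, θ (x i) ω * θ (y i) ω ∂P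
      = (ε ^ (2 * n))⁻¹ * Real.exp (-2 * ∑ i, (y i - x i) / ε ^ 2) := by
  rcases Nat.eq_zero_or_pos n with hn | hn
  · subst hn; simp
  have hε2 : (0 : ℝ) < ε ^ 2 := by positivity
  -- the ordered sequence of points, as a function on ℕ
  set W : ℕ → ℝ := fun k =>
    if (min k (2 * n - 1)) % 2 = 0 then
      x ⟨min ((min k (2 * n - 1)) / 2) (n - 1), by omega⟩ / ε ^ 2
    else
      y ⟨min ((min k (2 * n - 1)) / 2) (n - 1), by omega⟩ / ε ^ 2 with hW
  have hWx : ∀ j : Fin n, W (2 * j.val) = x j / ε ^ 2 := by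
    intro j
    have hj := j.isLt
    simp only [hW]
    rw [if_pos (show (min (2 * j.val) (2 * n - 1)) % 2 = 0 by omega)]
    congr 2
    exact Fin.ext (by simp only [Fin.val_mk]; omega)
  have hWy : ∀ j : Fin n, W (2 * j.val + 1) = y j / ε ^ 2 := by
    intro j
    have hj := j.isLt
    simp only [hW]
    rw [if_neg (show ¬ (min (2 * j.val + 1) (2 * n - 1)) % 2 = 0 by omega)]
    congr 2
    exact Fin.ext (by simp only [Fin.val_mk]; omega)
  have hWconst : ∀ k, 2 * n - 1 ≤ k → W k = W (2 * n - 1) := by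
    intro k hk
    simp only [hW]
    simp only [show min k (2 * n - 1) = min (2 * n - 1) (2 * n - 1) by omega]
  have hWmono : Monotone W := by
    apply monotone_nat_of_le_succ
    intro k
    by_cases hk : k + 1 ≤ 2 * n - 1
    · rcases Nat.even_or_odd k with ⟨m, hm⟩ | ⟨m, hm⟩
      · have hmn : m < n := by omega
        have h1 : W k = x ⟨m, hmn⟩ / ε ^ 2 := by
          rw [show k = 2 * (⟨m, hmn⟩ : Fin n).val by simp; omega]; exact hWx _
        have h2 : W (k + 1) = y ⟨m, hmn⟩ / ε ^ 2 := by
          rw [show k + 1 = 2 * (⟨m, hmn⟩ : Fin n).val + 1 by simp; omega]; exact hWy _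
        rw [h1, h2]
        gcongr
        exact hxy _
      · have hmn : m < n := by omega
        have hmn' : m + 1 < n := by omega
        have h1 : W k = y ⟨m, hmn⟩ / ε ^ 2 := by
          rw [show k = 2 * (⟨m, hmn⟩ : Fin n).val + 1 by simp; omega]; exact hWy _
        have h2 : W (k + 1) = x ⟨m + 1, hmn'⟩ / ε ^ 2 := by
          rw [show k + 1 = 2 * (⟨m + 1, hmn'⟩ : Fin n).val by simp; omega]; exact hWx _
        rw [h1, h2]
        gcongr
        exact hord ⟨m, hmn⟩ hmn'
    · rw [hWconst k (by omega), hWconst (k + 1) (by omega)]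
  have hW0 : (0 : ℝ) ≤ W 0 := by
    have h := hWx ⟨0, hn⟩
    simp only [Fin.val_mk, Nat.mul_zero] at h
    rw [h]
    exact div_nonneg (hx0 _) hε2.le
  have hWnonneg : ∀ k, (0 : ℝ) ≤ W k := fun k => hW0.trans (hWmono (Nat.zero_le k))
  -- the increment points for independence
  set u : Fin (2 * n + 1) → ℝ := fun j => W j.val with hu
  have humono : Monotone u := fun a b hab => hWmono hab
  have hDindep := hNindep (2 * n) u humono
  -- the factor functions
  set F : ℕ → Ω → ℝ := fun k ω =>
    if k % 2 = 0 then (-1 : ℝ) ^ (N (W (k + 1)) ω - N (W k) ω) else 1 with hF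
  set f : Fin (2 * n) → Ω → ℝ := fun i ω => F i.val ω with hf
  have hus : ∀ i : Fin (2 * n), u i.succ = W (i.val + 1) := by
    intro i; simp [hu]
  have huc : ∀ i : Fin (2 * n), u i.castSucc = W i.val := by
    intro i; simp [hu]
  have hfcomp : ∀ i : Fin (2 * n),
      f i = (fun k : ℕ => if i.val % 2 = 0 then (-1 : ℝ) ^ k else 1) ∘
        (fun ω => N (u i.succ) ω - N (u i.castSucc) ω) := by
    intro i
    funext ω
    simp only [hf, hF, Function.comp_apply, hus i, huc i]
  have hfindep : iIndepFun f P := by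
    have := hDindep.comp
      (fun i : Fin (2 * n) => (fun k : ℕ => if i.val % 2 = 0 then (-1 : ℝ) ^ k else 1))
      (fun i => measurable_from_top)
    have hfe : f = fun i : Fin (2 * n) =>
        (fun k : ℕ => if i.val % 2 = 0 then (-1 : ℝ) ^ k else 1) ∘
          (fun ω => N (u i.succ) ω - N (u i.castSucc) ω) := funext hfcomp
    rw [hfe]
    exact this
  have hfmeas : ∀ i, Measurable (f i) := by
    intro i
    rw [hfcomp i]
    exact measurable_from_top.comp ((hNmeas _).sub (hNmeas _))
  have hfbd : ∀ i ω, |f i ω| ≤ 1 := by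
    intro i ω
    simp only [hf, hF]
    split <;> simp [abs_pow]
  -- pointwise identity for the integrand
  have hstep1 : ∀ ω, ∏ i, θ (x i) ω * θ (y i) ω
      = (ε ^ (2 * n))⁻¹ * ∏ i : Fin (2 * n), f i ω := by
    intro ω
    have h2n : ∏ i : Fin (2 * n), f i ω = ∏ k ∈ Finset.range (2 * n), F k ω := by
      simp only [hf]
      exact Fin.prod_univ_eq_prod_range (fun k => F k ω) (2 * n)
    rw [h2n, aux_pair]
    have hterm : ∀ i : Fin n, θ (x i) ω * θ (y i) ω
        = (ε ^ 2)⁻¹ * ((-1 : ℝ) ^ N (x i / ε ^ 2) ω * (-1 : ℝ) ^ N (y i / ε ^ 2) ω) := by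
      intro i; rw [hθ, hθ]; ring
    rw [Finset.prod_congr rfl (fun i _ => hterm i), Finset.prod_mul_distrib,
      Finset.prod_const, Finset.card_univ, Fintype.card_fin,
      show ((ε ^ 2)⁻¹ : ℝ) ^ n = (ε ^ (2 * n))⁻¹ by rw [inv_pow, ← pow_mul]]
    congr 1
    rw [← Fin.prod_univ_eq_prod_range (fun j => F (2 * j) ω * F (2 * j + 1) ω) n]
    refine Finset.prod_congr rfl fun i _ => ?_
    have hF1 : F (2 * i.val) ω
        = (-1 : ℝ) ^ (N (W (2 * i.val + 1)) ω - N (W (2 * i.val)) ω) := by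
      simp only [hF]
      rw [if_pos (by omega)]
    have hF2 : F (2 * i.val + 1) ω = 1 := by
      simp only [hF]
      rw [if_neg (by omega)]
    rw [hF1, hF2, mul_one, hWx i, hWy i]
    have hle : N (x i / ε ^ 2) ω ≤ N (y i / ε ^ 2) ω :=
      hNmono ω (by gcongr; exact hxy i)
    have hsplit : N (y i / ε ^ 2) ω
        = N (x i / ε ^ 2) ω + (N (y i / ε ^ 2) ω - N (x i / ε ^ 2) ω) :=
      (Nat.add_sub_cancel' hle).symm
    rw [hsplit, pow_add, ← mul_assoc, ← pow_add]
    rw [Even.neg_one_pow ⟨N (x i / ε ^ 2) ω, rfl⟩, one_mul]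
    congr 1
    omega
  -- compute the integral
  rw [integral_congr_ae (ae_of_all _ hstep1), integral_const_mul,
    aux_integral_prod P f hfindep hfmeas hfbd]
  congr 1
  -- each expectation
  set E : ℕ → ℝ := fun k =>
    if k % 2 = 0 then Real.exp (-(2 * (W (k + 1) - W k))) else 1 with hE
  have hEi : ∀ i : Fin (2 * n), ∫ ω, f i ω ∂P = E i.val := by
    intro i
    by_cases h : i.val % 2 = 0
    · have hfi : (fun ω => f i ω)
          = fun ω => (-1 : ℝ) ^ (N (W (i.val + 1)) ω - N (W i.val) ω) := by
        funext ω; simp only [hf, hF]; rw [if_pos h]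
      have hle : W i.val ≤ W (i.val + 1) := hWmono (Nat.le_succ _)
      have := aux_poisson P (fun ω => N (W (i.val + 1)) ω - N (W i.val) ω)
        ((hNmeas _).sub (hNmeas _)) (W (i.val + 1) - W i.val) (by linarith)
        (fun k => hNdist (W i.val) (W (i.val + 1)) (hWnonneg _) hle k)
      rw [hfi, this]
      simp only [hE]
      rw [if_pos h]
    · have hfi : (fun ω => f i ω) = fun _ω => (1 : ℝ) := by
        funext ω; simp only [hf, hF]; rw [if_neg h]
      rw [hfi]
      simp only [hE]
      rw [if_neg h]
      simp
  rw [Finset.prod_congr rfl (fun i _ => hEi i),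
    Fin.prod_univ_eq_prod_range E (2 * n), aux_pair,
    ← Fin.prod_univ_eq_prod_range (fun j => E (2 * j) * E (2 * j + 1)) n]
  have hterm : ∀ i : Fin n, E (2 * i.val) * E (2 * i.val + 1)
      = Real.exp (-2 * ((y i - x i) / ε ^ 2)) := by
    intro i
    have h1 : E (2 * i.val) = Real.exp (-(2 * (W (2 * i.val + 1) - W (2 * i.val)))) := by
      simp only [hE]; rw [if_pos (by omega)]
    have h2 : E (2 * i.val + 1) = 1 := by
      simp only [hE]; rw [if_neg (by omega)]
    rw [h1, h2, mul_one, hWx i, hWy i]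
    congr 1
    ring
  rw [Finset.prod_congr rfl (fun i _ => hterm i), ← Real.exp_sum]
  congr 1
  rw [Finset.mul_sum]
end

section
/- Let ξ₁, ξ₂, … be i.i.d. real random variables with E ξ₁ = 0 and Var ξ₁ = 1, and for ε ∈ (0,1) define the Donsker kernel θ_ε(s) = ε^{-1} ∑_{k≥1} ξ_k 1_{[k-1,k)}(s/ε²). Then for every symmetric f ∈ L²([0,T]ⁿ) and every t ∈ [0,T], E[( ∫_{[0,t]ⁿ} f(x₁,…,xₙ) ∏_{i=1}^n θ_ε(x_i) ∏_{i≠j} 1_{|x_i - x_j| > ε} dx )²] ≤ n! ‖f‖²_{L²([0,T]ⁿ)}. -/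
open MeasureTheory ProbabilityTheory

lemma aux_prod_integral {Ω : Type*} [MeasurableSpace Ω] (P : Measure Ω) [IsProbabilityMeasure P]
    (g : ℕ → Ω → ℝ) (hmeas : ∀ m, Measurable (g m))
    (hindep : iIndepFun g P)
    (hint : ∀ m, Integrable (g m) P) (s : Finset ℕ) :
    Integrable (fun ω => ∏ m ∈ s, g m ω) P ∧
      ∫ ω, ∏ m ∈ s, g m ω ∂P = ∏ m ∈ s, ∫ ω, g m ω ∂P := by
  classical
  induction s using Finset.induction_on with
  | empty => exact ⟨by simpa using integrable_const (1:ℝ), by simp⟩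
  | @insert a s ha ih =>
    obtain ⟨ih1, ih2⟩ := ih
    have hindepf : IndepFun (∏ m ∈ s, g m) (g a) P :=
      hindep.indepFun_finsetProd_of_notMem hmeas ha
    have hprodeq : (∏ m ∈ s, g m) = fun ω => ∏ m ∈ s, g m ω := by
      ext ω; simp [Finset.prod_apply]
    rw [hprodeq] at hindepf
    have hint' : Integrable (fun ω => (∏ m ∈ s, g m ω) * g a ω) P := by
      have := hindepf.integrable_mul ih1 (hint a)
      exact this
    constructor
    · simp only [Finset.prod_insert ha]
      have : (fun ω => g a ω * ∏ m ∈ s, g m ω) = fun ω => (∏ m ∈ s, g m ω) * g a ω := by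
        ext ω; ring
      rw [this]; exact hint'
    · simp only [Finset.prod_insert ha]
      have h1 : ∫ ω, g a ω * ∏ m ∈ s, g m ω ∂P = ∫ ω, (∏ m ∈ s, g m ω) * g a ω ∂P := by
        congr 1; ext ω; ring
      have h2 := hindepf.integral_mul_eq_mul_integral ih1.1 (hint a).1
      simp only [Pi.mul_apply] at h2
      rw [h1]
      calc ∫ ω, (∏ m ∈ s, g m ω) * g a ω ∂P
          = (∫ ω, ∏ m ∈ s, g m ω ∂P) * ∫ ω, g a ω ∂P := h2
        _ = (∫ ω, g a ω ∂P) * ∏ m ∈ s, ∫ ω, g m ω ∂P := by rw [ih2]; ring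

lemma aux_moment {Ω : Type*} [MeasurableSpace Ω] (P : Measure Ω) [IsProbabilityMeasure P]
    (ξ : ℕ → Ω → ℝ) (hmeas : ∀ k, Measurable (ξ k))
    (hindep : iIndepFun ξ P)
    (hident : ∀ k, IdentDistrib (ξ k) (ξ 0) P P)
    (hL2 : MemLp (ξ 0) 2 P)
    (hmean : ∫ ω, ξ 0 ω ∂P = 0)
    (hvar : ∫ ω, (ξ 0 ω) ^ 2 ∂P = 1)
    (n : ℕ) (k l : Fin n → ℕ) (hk : Function.Injective k) (hl : Function.Injective l) :
    Integrable (fun ω => (∏ i, ξ (k i) ω) * ∏ i, ξ (l i) ω) P ∧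
    (0 ≤ ∫ ω, (∏ i, ξ (k i) ω) * ∏ i, ξ (l i) ω ∂P ∧
    ∫ ω, (∏ i, ξ (k i) ω) * ∏ i, ξ (l i) ω ∂P ≤
      ∑ σ : Equiv.Perm (Fin n), ∏ i, (if k i = l (σ i) then (1:ℝ) else 0)) ∧
    ∫ ω, |(∏ i, ξ (k i) ω) * ∏ i, ξ (l i) ω| ∂P ≤ (max (∫ ω, |ξ 0 ω| ∂P) 1) ^ (2 * n) := by
  classical
  set M : ℝ := max (∫ ω, |ξ 0 ω| ∂P) 1 with hM
  have hM1 : (1:ℝ) ≤ M := le_max_right _ _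
  have memℒ2 : ∀ m, MemLp (ξ m) 2 P := fun m => (hident m).memLp_iff.mpr hL2
  have int1 : ∀ m, Integrable (ξ m) P := fun m => (memℒ2 m).integrable one_le_two
  have intsq : ∀ m, Integrable (fun ω => ξ m ω ^ 2) P := fun m => (memℒ2 m).integrable_sq
  have Evar : ∀ m, ∫ ω, ξ m ω ^ 2 ∂P = 1 := fun m => by
    have := ((hident m).comp (measurable_id.pow_const 2)).integral_eq
    simpa using this.trans hvar
  have Emean : ∀ m, ∫ ω, ξ m ω ∂P = 0 := fun m => (hident m).integral_eq.trans hmean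
  have Eabs : ∀ m, ∫ ω, |ξ m ω| ∂P = ∫ ω, |ξ 0 ω| ∂P := fun m =>
    ((hident m).comp measurable_abs).integral_eq
  set sk : Finset ℕ := Finset.image k Finset.univ with hsk
  set sl : Finset ℕ := Finset.image l Finset.univ with hsl
  set s : Finset ℕ := sk ∪ sl with hs
  set e : ℕ → ℕ := fun m => (if m ∈ sk then 1 else 0) + (if m ∈ sl then 1 else 0) with he
  have hecases : ∀ m, e m = 0 ∨ e m = 1 ∨ e m = 2 := by
    intro m; simp only [he]; split_ifs <;> simp
  have hprodk : ∀ ω, ∏ m ∈ sk, ξ m ω = ∏ i, ξ (k i) ω := fun ω =>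
    Finset.prod_image (fun i _ j _ h => hk h)
  have hprodl : ∀ ω, ∏ m ∈ sl, ξ m ω = ∏ i, ξ (l i) ω := fun ω =>
    Finset.prod_image (fun i _ j _ h => hl h)
  have hsub : ∀ (F : ℕ → ℝ) (tt : Finset ℕ), tt ⊆ s →
      ∏ m ∈ s, (if m ∈ tt then F m else 1) = ∏ m ∈ tt, F m := by
    intro F tt htt
    rw [Finset.prod_ite_mem s tt F, Finset.inter_eq_right.mpr htt]
  have hXeq : ∀ (F : ℕ → ℝ → ℝ), (∀ m, F m 1 = 1) →
      ∀ ω, (∏ m ∈ s, F m (ξ m ω) ^ e m) =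
        (∏ m ∈ sk, F m (ξ m ω)) * ∏ m ∈ sl, F m (ξ m ω) := by
    intro F hF1 ω
    have : ∀ m ∈ s, F m (ξ m ω) ^ e m =
        (if m ∈ sk then F m (ξ m ω) else 1) * (if m ∈ sl then F m (ξ m ω) else 1) := by
      intro m _
      simp only [he, pow_add]
      split_ifs <;> simp
    rw [Finset.prod_congr rfl this, Finset.prod_mul_distrib,
      hsub _ sk Finset.subset_union_left, hsub _ sl Finset.subset_union_right]
  have hXeq' : ∀ ω, (∏ i, ξ (k i) ω) * ∏ i, ξ (l i) ω = ∏ m ∈ s, ξ m ω ^ e m := by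
    intro ω
    rw [hXeq (fun _ x => x) (fun _ => rfl) ω, hprodk, hprodl]
  -- the signed product
  have hindep_pow : iIndepFun (fun m ω => ξ m ω ^ e m) P :=
    hindep.comp (fun m x => x ^ e m) (fun m => measurable_id.pow_const (e m))
  have hmeas_pow : ∀ m, Measurable (fun ω => ξ m ω ^ e m) :=
    fun m => (hmeas m).pow_const (e m)
  have hint_pow : ∀ m, Integrable (fun ω => ξ m ω ^ e m) P := by
    intro m
    rcases hecases m with h | h | h <;> rw [h]
    · simpa using integrable_const (1:ℝ)
    · simpa using int1 m
    · exact intsq m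
  obtain ⟨hInt, hIeq⟩ := aux_prod_integral P _ hmeas_pow hindep_pow hint_pow s
  -- the absolute product
  have hindep_abs : iIndepFun (fun m ω => |ξ m ω| ^ e m) P :=
    hindep.comp (fun m x => |x| ^ e m) (fun m => measurable_abs.pow_const (e m))
  have hmeas_abs : ∀ m, Measurable (fun ω => |ξ m ω| ^ e m) :=
    fun m => ((hmeas m).abs).pow_const (e m)
  have hint_abs : ∀ m, Integrable (fun ω => |ξ m ω| ^ e m) P := by
    intro m
    rcases hecases m with h | h | h <;> rw [h]
    · simpa using integrable_const (1:ℝ)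
    · simpa using (int1 m).abs
    · simpa [sq_abs] using intsq m
  obtain ⟨hIntA, hIeqA⟩ := aux_prod_integral P _ hmeas_abs hindep_abs hint_abs s
  have hXabs : ∀ ω, |(∏ i, ξ (k i) ω) * ∏ i, ξ (l i) ω| = ∏ m ∈ s, |ξ m ω| ^ e m := by
    intro ω
    rw [hXeq' ω, Finset.abs_prod]
    exact Finset.prod_congr rfl fun m _ => abs_pow _ _
  have hIX : ∫ ω, (∏ i, ξ (k i) ω) * ∏ i, ξ (l i) ω ∂P = ∏ m ∈ s, ∫ ω, ξ m ω ^ e m ∂P := by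
    rw [← hIeq]; exact integral_congr_ae (Filter.Eventually.of_forall fun ω => hXeq' ω)
  have hIXabs : ∫ ω, |(∏ i, ξ (k i) ω) * ∏ i, ξ (l i) ω| ∂P
      = ∏ m ∈ s, ∫ ω, |ξ m ω| ^ e m ∂P := by
    rw [← hIeqA]; exact integral_congr_ae (Filter.Eventually.of_forall fun ω => hXabs ω)
  have hsum_nonneg : (0:ℝ) ≤ ∑ σ : Equiv.Perm (Fin n), ∏ i, (if k i = l (σ i) then (1:ℝ) else 0) :=
    Finset.sum_nonneg fun σ _ => Finset.prod_nonneg fun i _ => by positivity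
  have hval : (sk = sl ∧ ∫ ω, (∏ i, ξ (k i) ω) * ∏ i, ξ (l i) ω ∂P = 1) ∨
      ∫ ω, (∏ i, ξ (k i) ω) * ∏ i, ξ (l i) ω ∂P = 0 := by
    by_cases hskl : sk = sl
    · left
      refine ⟨hskl, ?_⟩
      rw [hIX]
      have hs_eq : s = sk := by rw [hs, hskl, Finset.union_self]
      have : ∀ m ∈ s, ∫ ω, ξ m ω ^ e m ∂P = 1 := by
        intro m hm
        rw [hs_eq] at hm
        have h2 : e m = 2 := by
          simp only [he, if_pos hm, if_pos (hskl ▸ hm)]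
        rw [h2]; exact Evar m
      rw [Finset.prod_congr rfl this, Finset.prod_const_one]
    · right
      have : ∃ m ∈ s, e m = 1 := by
        have h : ¬ sk ⊆ sl ∨ ¬ sl ⊆ sk := by
          by_contra hcon; push_neg at hcon
          exact hskl (Finset.Subset.antisymm hcon.1 hcon.2)
        rcases h with h | h
        · obtain ⟨m, hm1, hm2⟩ := Finset.not_subset.mp h
          exact ⟨m, Finset.mem_union_left _ hm1, by simp [he, hm1, hm2]⟩
        · obtain ⟨m, hm1, hm2⟩ := Finset.not_subset.mp h
          exact ⟨m, Finset.mem_union_right _ hm1, by simp [he, hm1, hm2]⟩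
      obtain ⟨m, hm, hem⟩ := this
      rw [hIX]
      refine Finset.prod_eq_zero hm ?_
      rw [hem]; simpa using Emean m
  refine ⟨?_, ⟨?_, ?_⟩, ?_⟩
  · exact hInt.congr (Filter.Eventually.of_forall fun ω => (hXeq' ω).symm)
  · rcases hval with ⟨_, hv⟩ | hv <;> rw [hv] <;> norm_num
  · rcases hval with ⟨hskl, hv⟩ | hv
    · rw [hv]
      have hex : ∀ i, ∃ j, l j = k i := by
        intro i
        have : k i ∈ sl := hskl ▸ Finset.mem_image_of_mem k (Finset.mem_univ i)
        obtain ⟨j, _, hj⟩ := Finset.mem_image.mp this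
        exact ⟨j, hj⟩
      choose σ0 hσ0 using hex
      have hσinj : Function.Injective σ0 := fun i j h => hk (by rw [← hσ0 i, ← hσ0 j, h])
      let σ : Equiv.Perm (Fin n) := Equiv.ofBijective σ0 (Finite.injective_iff_bijective.mp hσinj)
      have hterm : ∏ i, (if k i = l (σ i) then (1:ℝ) else 0) = 1 := by
        refine Finset.prod_eq_one fun i _ => ?_
        have : l (σ i) = k i := hσ0 i
        simp [this]
      calc (1:ℝ) = ∏ i, (if k i = l (σ i) then (1:ℝ) else 0) := hterm.symm
        _ ≤ ∑ σ : Equiv.Perm (Fin n), ∏ i, (if k i = l (σ i) then (1:ℝ) else 0) :=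
          Finset.single_le_sum
            (f := fun τ : Equiv.Perm (Fin n) => ∏ i, (if k i = l (τ i) then (1:ℝ) else 0))
            (fun τ _ => Finset.prod_nonneg fun i _ => by positivity) (Finset.mem_univ σ)
    · rw [hv]; exact hsum_nonneg
  · rw [hIXabs]
    have hfac : ∀ m ∈ s, ∫ ω, |ξ m ω| ^ e m ∂P ≤ M := by
      intro m _
      rcases hecases m with h | h | h <;> rw [h]
      · simpa using hM1
      · simp only [pow_one]
        rw [Eabs m]; exact le_max_left _ _
      · simp only [sq_abs]
        rw [Evar m]; exact hM1
    have hfac0 : ∀ m ∈ s, 0 ≤ ∫ ω, |ξ m ω| ^ e m ∂P := fun m _ =>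
      integral_nonneg fun ω => by positivity
    calc ∏ m ∈ s, ∫ ω, |ξ m ω| ^ e m ∂P ≤ ∏ m ∈ s, M :=
          Finset.prod_le_prod hfac0 hfac
      _ = M ^ s.card := Finset.prod_const M
      _ ≤ M ^ (2 * n) := by
          refine pow_le_pow_right₀ hM1 ?_
          calc s.card ≤ sk.card + sl.card := Finset.card_union_le _ _
            _ ≤ 2 * n := by
                have h1 : sk.card ≤ n := le_trans (Finset.card_image_le) (by simp)
                have h2 : sl.card ≤ n := le_trans (Finset.card_image_le) (by simp)
                omega


lemma aux_floor_dist {c a b : ℝ} (hc : 0 < c) (ha : 0 ≤ a) (hb : 0 ≤ b)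
    (h : ⌊a / c⌋₊ = ⌊b / c⌋₊) : |a - b| < c := by
  have ha' : (⌊a / c⌋₊ : ℝ) ≤ a / c := Nat.floor_le (div_nonneg ha hc.le)
  have ha'' : a / c < ⌊a / c⌋₊ + 1 := Nat.lt_floor_add_one _
  have hb' : (⌊b / c⌋₊ : ℝ) ≤ b / c := Nat.floor_le (div_nonneg hb hc.le)
  have hb'' : b / c < ⌊b / c⌋₊ + 1 := Nat.lt_floor_add_one _
  rw [h] at ha' ha''
  have e1 : a / c * c = a := div_mul_cancel₀ a hc.ne'
  have e2 : b / c * c = b := div_mul_cancel₀ b hc.ne'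
  rw [abs_sub_lt_iff]
  constructor <;> nlinarith

lemma aux_interval_integral {c t : ℝ} (hc : 0 < c) (m : ℕ) :
    (0 ≤ ∫ y in Set.Icc (0:ℝ) t, (if ⌊y / c⌋₊ = m then (1:ℝ) else 0)) ∧
    ∫ y in Set.Icc (0:ℝ) t, (if ⌊y / c⌋₊ = m then (1:ℝ) else 0) ≤ c := by
  have hKmeas : Measurable fun y : ℝ => ⌊y / c⌋₊ :=
    Nat.measurable_floor.comp (measurable_id.div_const c)
  have hgmeas : Measurable fun y : ℝ => (if ⌊y / c⌋₊ = m then (1:ℝ) else 0) := by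
    refine Measurable.ite (hKmeas (measurableSet_singleton m)) measurable_const measurable_const
  have hgint : Integrable (fun y : ℝ => (if ⌊y / c⌋₊ = m then (1:ℝ) else 0))
      (volume.restrict (Set.Icc (0:ℝ) t)) := by
    refine Integrable.mono' (integrable_const 1) hgmeas.aestronglyMeasurable ?_
    filter_upwards with y
    split_ifs <;> simp
  have hindint : Integrable ((Set.Ico (m * c) ((m + 1) * c)).indicator fun _ => (1:ℝ))
      (volume.restrict (Set.Icc (0:ℝ) t)) :=
    (integrable_const 1).indicator measurableSet_Ico
  constructor
  · refine setIntegral_nonneg measurableSet_Icc fun y _ => ?_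
    split_ifs <;> norm_num
  · have hle : ∀ y ∈ Set.Icc (0:ℝ) t, (if ⌊y / c⌋₊ = m then (1:ℝ) else 0) ≤
        (Set.Ico (m * c) ((m + 1) * c)).indicator (fun _ => (1:ℝ)) y := by
      intro y hy
      split_ifs with hfl
      · have h1 : (m : ℝ) ≤ y / c := hfl ▸ Nat.floor_le (div_nonneg hy.1 hc.le)
        have h2 : y / c < m + 1 := hfl ▸ Nat.lt_floor_add_one _
        have hmem : y ∈ Set.Ico (m * c) ((m + 1) * c) := by
          constructor
          · calc (m:ℝ) * c ≤ (y / c) * c := by nlinarith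
              _ = y := by field_simp
          · calc y = (y / c) * c := by field_simp
              _ < ((m:ℝ) + 1) * c := by nlinarith
        rw [Set.indicator_of_mem hmem]
      · exact Set.indicator_nonneg (fun _ _ => zero_le_one) y
    calc ∫ y in Set.Icc (0:ℝ) t, (if ⌊y / c⌋₊ = m then (1:ℝ) else 0)
        ≤ ∫ y in Set.Icc (0:ℝ) t, (Set.Ico (m * c) ((m + 1) * c)).indicator (fun _ => (1:ℝ)) y :=
          setIntegral_mono_on hgint hindint measurableSet_Icc hle
      _ = ∫ y in Set.Icc (0:ℝ) t ∩ Set.Ico (m * c) ((m + 1) * c), (1:ℝ) :=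
          setIntegral_indicator measurableSet_Ico
      _ = (volume (Set.Icc (0:ℝ) t ∩ Set.Ico (m * c) ((m + 1) * c))).toReal • (1:ℝ) :=
          setIntegral_const 1
      _ ≤ (volume (Set.Ico (m * c) ((m + 1) * c))).toReal := by
          rw [smul_eq_mul, mul_one]
          refine ENNReal.toReal_mono (by simp [Real.volume_Ico]) ?_
          exact measure_mono Set.inter_subset_right
      _ = c := by
          rw [Real.volume_Ico]
          rw [ENNReal.toReal_ofReal (by nlinarith)]
          ring

lemma aux_pi_integral {n : ℕ} {S : Set ℝ} (hS : MeasurableSet S) (G : Fin n → ℝ → ℝ)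
    (hG : ∀ j, Measurable (G j)) :
    ∫ y in Set.univ.pi (fun _ : Fin n => S), ∏ j, G j (y j) =
      ∏ j, ∫ y in S, G j y := by
  rw [← integral_indicator (MeasurableSet.univ_pi fun _ => hS)]
  have : (Set.univ.pi (fun _ : Fin n => S)).indicator (fun y => ∏ j, G j (y j)) =
      fun y => ∏ j, (S.indicator (G j)) (y j) := by
    ext y
    by_cases hy : y ∈ Set.univ.pi (fun _ : Fin n => S)
    · rw [Set.indicator_of_mem hy]
      refine Finset.prod_congr rfl fun j _ => ?_
      rw [Set.indicator_of_mem (hy j (Set.mem_univ j))]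
    · rw [Set.indicator_of_notMem hy]
      have hex : ∃ j, y j ∉ S := by simpa [Set.mem_pi] using hy
      obtain ⟨j, hj⟩ := hex
      exact (Finset.prod_eq_zero (Finset.mem_univ j) (by rw [Set.indicator_of_notMem hj])).symm
  rw [this, MeasureTheory.volume_pi, MeasureTheory.integral_fintype_prod_eq_prod
    (fun j => S.indicator (G j))]
  exact Finset.prod_congr rfl fun j _ => (integral_indicator hS)

set_option maxHeartbeats 1000000 in
/-- Donsker kernels: `ξ₁, ξ₂, …` i.i.d. with mean `0` and variance `1`, and
`θ_ε(s) = ε⁻¹ Σ_k ξ_k 1_{[k-1,k)}(s/ε²)` (i.e. `θ_ε(s) = ε⁻¹ ξ_{⌊s/ε²⌋}`).  For every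
symmetric `f ∈ L²([0,T]ⁿ)`, `ε ∈ (0,1)` and `t ∈ [0,T]`,
`E[(∫_{[0,t]ⁿ} f(x) ∏ᵢ θ_ε(xᵢ) ∏_{i≠j} 1_{|x_i-x_j|>ε} dx)²] ≤ n! ‖f‖²_{L²([0,T]ⁿ)}`. -/
theorem stmt_6 {Ω : Type*} [MeasurableSpace Ω] (P : Measure Ω) [IsProbabilityMeasure P]
    (ξ : ℕ → Ω → ℝ) (hmeas : ∀ k, Measurable (ξ k))
    (hindep : iIndepFun ξ P)
    (hident : ∀ k, IdentDistrib (ξ k) (ξ 0) P P)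
    (hL2 : MemLp (ξ 0) 2 P)
    (hmean : ∫ ω, ξ 0 ω ∂P = 0)
    (hvar : ∫ ω, (ξ 0 ω) ^ 2 ∂P = 1)
    (ε : ℝ) (hε : ε ∈ Set.Ioo (0 : ℝ) 1)
    (θ : ℝ → Ω → ℝ) (hθ : ∀ s ω, θ s ω = ε⁻¹ * ξ ⌊s / ε ^ 2⌋₊ ω)
    (T : ℝ) (n : ℕ) (f : (Fin n → ℝ) → ℝ) (hfmeas : Measurable f)
    (hfL2 : IntegrableOn (fun x => f x ^ 2)
      (Set.univ.pi fun _ : Fin n => Set.Icc (0 : ℝ) T))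
    (hsym : ∀ (σ : Equiv.Perm (Fin n)) (x : Fin n → ℝ), f (x ∘ σ) = f x)
    (t : ℝ) (ht : t ∈ Set.Icc (0 : ℝ) T) :
    ∫ ω, (∫ x in Set.univ.pi (fun _ : Fin n => Set.Icc (0 : ℝ) t),
        f x * ∏ i, θ (x i) ω *
          ∏ j ∈ Finset.univ.erase i, if ε < |x i - x j| then (1 : ℝ) else 0) ^ 2 ∂P
      ≤ (Nat.factorial n) *
        ∫ x in Set.univ.pi (fun _ : Fin n => Set.Icc (0 : ℝ) T), f x ^ 2 := by
  classical
  obtain ⟨hε0, hε1⟩ := hε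
  obtain ⟨ht0, htT⟩ := ht
  have hc0 : (0:ℝ) < ε ^ 2 := by positivity
  have hcε : ε ^ 2 < ε := by nlinarith
  have hKmeas : Measurable fun s : ℝ => ⌊s / ε ^ 2⌋₊ :=
    Nat.measurable_floor.comp (measurable_id.div_const _)
  set A : Set (Fin n → ℝ) := Set.univ.pi fun _ : Fin n => Set.Icc (0:ℝ) t with hA
  set A' : Set (Fin n → ℝ) := Set.univ.pi fun _ : Fin n => Set.Icc (0:ℝ) T with hA'
  have hAm : MeasurableSet A := MeasurableSet.univ_pi fun _ => measurableSet_Icc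
  have hAA' : A ⊆ A' := Set.pi_mono fun i _ => Set.Icc_subset_Icc_right htT
  have hvolA : volume A ≠ ⊤ := by
    rw [hA, volume_pi_pi]
    exact (ENNReal.prod_lt_top fun i _ => by simp [Real.volume_Icc]).ne
  haveI : IsFiniteMeasure (volume.restrict A) :=
    ⟨by rw [Measure.restrict_apply_univ]; exact hvolA.lt_top⟩
  -- the indicator-cutoff function
  set h : (Fin n → ℝ) → ℝ := fun x =>
    ∏ i, ∏ j ∈ Finset.univ.erase i, if ε < |x i - x j| then (1:ℝ) else 0 with hh
  have hhmeas : Measurable h := by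
    refine Finset.measurable_prod _ fun i _ => Finset.measurable_prod _ fun j _ => ?_
    exact Measurable.ite
      (measurableSet_lt measurable_const ((measurable_pi_apply i).sub (measurable_pi_apply j)).abs)
      measurable_const measurable_const
  have hh0 : ∀ x, 0 ≤ h x := fun x =>
    Finset.prod_nonneg fun i _ => Finset.prod_nonneg fun j _ => by positivity
  have hh1 : ∀ x, h x ≤ 1 := fun x =>
    Finset.prod_le_one (fun i _ => Finset.prod_nonneg fun j _ => by positivity)
      (fun i _ => Finset.prod_le_one (fun j _ => by positivity)
        (fun j _ => by split <;> norm_num))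
  set g : (Fin n → ℝ) → ℝ := fun x => f x * h x * ε⁻¹ ^ n with hg
  set q : (Fin n → ℝ) → ℝ := fun x => A.indicator g x with hq
  have hqmeas : Measurable q := ((hfmeas.mul hhmeas).mul measurable_const).indicator hAm
  have hqA : ∀ x, x ∉ A → q x = 0 := fun x hx => Set.indicator_of_notMem hx g
  have hqmem : ∀ x, x ∈ A → q x = f x * h x * ε⁻¹ ^ n := fun x hx => Set.indicator_of_mem hx g
  -- injectivity of the floor indices whenever q ≠ 0
  have hinj : ∀ x, q x ≠ 0 → Function.Injective fun i => ⌊x i / ε ^ 2⌋₊ := by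
    intro x hx
    have hxA : x ∈ A := by by_contra hc; exact hx (hqA x hc)
    rw [hqmem x hxA] at hx
    have hhx : h x ≠ 0 := fun h0 => hx (by rw [h0]; ring)
    intro i j hij
    by_contra hne
    have hfac := Finset.prod_ne_zero_iff.mp hhx i (Finset.mem_univ i)
    have hfac2 := Finset.prod_ne_zero_iff.mp hfac j
      (Finset.mem_erase.mpr ⟨fun hji => hne hji.symm, Finset.mem_univ j⟩)
    have hgt : ε < |x i - x j| := by
      by_contra hle; exact hfac2 (if_neg hle)
    have hxi : (0:ℝ) ≤ x i := (hxA i (Set.mem_univ i)).1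
    have hxj : (0:ℝ) ≤ x j := (hxA j (Set.mem_univ j)).1
    have := aux_floor_dist hc0 hxi hxj hij
    linarith
  clear_value A A' h g q
  -- joint measurability of the random product
  set X : (Fin n → ℝ) → Ω → ℝ := fun x ω => ∏ i, ξ ⌊x i / ε ^ 2⌋₊ ω with hX
  have hXmeas : Measurable fun p : (Fin n → ℝ) × Ω => X p.1 p.2 := by
    simp only [hX]
    refine Finset.measurable_prod _ fun i _ => ?_
    have hgm : Measurable fun p : Ω × ℕ => ξ p.2 p.1 :=
      measurable_from_prod_countable_left fun m => hmeas m
    exact hgm.comp (measurable_snd.prodMk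
      (hKmeas.comp ((measurable_pi_apply i).comp measurable_fst)))
  clear_value X
  set M : ℝ := max (∫ ω, |ξ 0 ω| ∂P) 1 with hM
  have hM1 : (1:ℝ) ≤ M := le_max_right _ _
  set C : ℝ := M ^ (2 * n) with hC
  have hC0 : (0:ℝ) ≤ C := pow_nonneg (by linarith) _
  -- the permutation kernel
  set S : (Fin n → ℝ) × (Fin n → ℝ) → ℝ := fun z =>
    ∑ σ : Equiv.Perm (Fin n), ∏ i,
      (if ⌊z.1 i / ε ^ 2⌋₊ = ⌊z.2 (σ i) / ε ^ 2⌋₊ then (1:ℝ) else 0) with hS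
  have hSmeas : Measurable S := by
    simp only [hS]
    refine Finset.measurable_sum _ fun σ _ => Finset.measurable_prod _ fun i _ => ?_
    refine Measurable.ite ?_ measurable_const measurable_const
    exact measurableSet_eq_fun
      (hKmeas.comp ((measurable_pi_apply i).comp measurable_fst))
      (hKmeas.comp ((measurable_pi_apply (σ i)).comp measurable_snd))
  have hS0 : ∀ z, 0 ≤ S z := fun z =>
    Finset.sum_nonneg fun σ _ => Finset.prod_nonneg fun i _ => by positivity
  have hSle : ∀ z, S z ≤ (n.factorial : ℝ) := by
    intro z
    calc S z ≤ ∑ _σ : Equiv.Perm (Fin n), (1:ℝ) := Finset.sum_le_sum fun σ _ =>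
          Finset.prod_le_one (fun i _ => by positivity) (fun i _ => by split <;> norm_num)
      _ = (Fintype.card (Equiv.Perm (Fin n)) : ℝ) := by simp
      _ = (n.factorial : ℝ) := by rw [Fintype.card_perm, Fintype.card_fin]
  clear_value M C S
  -- moments
  have moment : ∀ z : (Fin n → ℝ) × (Fin n → ℝ), q z.1 ≠ 0 → q z.2 ≠ 0 →
      Integrable (fun ω => X z.1 ω * X z.2 ω) P ∧
      (0 ≤ ∫ ω, X z.1 ω * X z.2 ω ∂P ∧ ∫ ω, X z.1 ω * X z.2 ω ∂P ≤ S z) ∧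
      ∫ ω, |X z.1 ω * X z.2 ω| ∂P ≤ C := by
    intro z h1 h2
    have := aux_moment P ξ hmeas hindep hident hL2 hmean hvar n
      (fun i => ⌊z.1 i / ε ^ 2⌋₊) (fun i => ⌊z.2 i / ε ^ 2⌋₊) (hinj _ h1) (hinj _ h2)
    simpa [hX, hS, hM, hC] using this
  -- integrability of q and q²
  have hf2A : Integrable (fun x => f x ^ 2) (volume.restrict A) := hfL2.mono_set hAA'
  have hmaj1 : Integrable (fun x => ε⁻¹ ^ n * (1 + f x ^ 2)) (volume.restrict A) := by
    have := ((integrable_const (1:ℝ)).add hf2A).const_mul (ε⁻¹ ^ n)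
    simpa [Pi.add_apply] using this
  have hqint : Integrable q (volume.restrict A) := by
    refine Integrable.mono' hmaj1 hqmeas.aestronglyMeasurable ?_
    filter_upwards with x
    rw [Real.norm_eq_abs]
    have hεn : (0:ℝ) ≤ ε⁻¹ ^ n := by positivity
    by_cases hxA : x ∈ A
    · rw [hqmem x hxA]
      have h1 : |f x * h x * ε⁻¹ ^ n| = |f x| * h x * ε⁻¹ ^ n := by
        rw [abs_mul, abs_mul, abs_of_nonneg (hh0 x), abs_of_nonneg hεn]
      rw [h1]
      have h2 : |f x| * h x ≤ 1 + f x ^ 2 := by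
        nlinarith [sq_abs (f x), abs_nonneg (f x), hh0 x, hh1 x]
      calc |f x| * h x * ε⁻¹ ^ n ≤ (1 + f x ^ 2) * ε⁻¹ ^ n := by nlinarith
        _ = ε⁻¹ ^ n * (1 + f x ^ 2) := by ring
    · rw [hqA x hxA, abs_zero]
      have : (0:ℝ) ≤ 1 + f x ^ 2 := by positivity
      nlinarith
  have hq2int : Integrable (fun x => q x ^ 2) (volume.restrict A) := by
    refine Integrable.mono' (hf2A.const_mul ((ε⁻¹ ^ n) ^ 2))
      (hqmeas.pow_const 2).aestronglyMeasurable ?_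
    filter_upwards with x
    rw [Real.norm_eq_abs, abs_of_nonneg (sq_nonneg _)]
    by_cases hxA : x ∈ A
    · rw [hqmem x hxA]
      have hss : (f x * h x * ε⁻¹ ^ n) ^ 2 = f x ^ 2 * h x ^ 2 * (ε⁻¹ ^ n) ^ 2 := by ring
      rw [hss]
      have hh2 : h x ^ 2 ≤ 1 := by nlinarith [hh0 x, hh1 x]
      nlinarith [mul_nonneg (mul_nonneg (sq_nonneg (f x)) (sq_nonneg (ε⁻¹ ^ n)))
        (sub_nonneg.mpr hh2)]
    · rw [hqA x hxA]
      have h0 : (0:ℝ) ^ 2 = 0 := by norm_num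
      rw [h0]
      have hp : (0:ℝ) ≤ (ε⁻¹ ^ n) ^ 2 := sq_nonneg _
      nlinarith [sq_nonneg (f x)]
  have hfst : ∀ {u : (Fin n → ℝ) → ℝ}, Integrable u (volume.restrict A) →
      Integrable (fun z : (Fin n → ℝ) × (Fin n → ℝ) => u z.1)
        ((volume.restrict A).prod (volume.restrict A)) := by
    intro u hu
    simpa using hu.mul_prod (integrable_const (1:ℝ))
  have hsnd : ∀ {u : (Fin n → ℝ) → ℝ}, Integrable u (volume.restrict A) →
      Integrable (fun z : (Fin n → ℝ) × (Fin n → ℝ) => u z.2)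
        ((volume.restrict A).prod (volume.restrict A)) := by
    intro u hu
    simpa using (integrable_const (1:ℝ)).mul_prod hu
  have hqq : Integrable (fun z : (Fin n → ℝ) × (Fin n → ℝ) => |q z.1| * |q z.2|)
      ((volume.restrict A).prod (volume.restrict A)) := hqint.abs.mul_prod hqint.abs
  -- the doubled integrand
  set Φ : Ω → (Fin n → ℝ) × (Fin n → ℝ) → ℝ := fun ω z =>
    (q z.1 * X z.1 ω) * (q z.2 * X z.2 ω) with hΦ
  clear_value Φ
  have hΦmeas : Measurable fun p : Ω × ((Fin n → ℝ) × (Fin n → ℝ)) => Φ p.1 p.2 := by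
    simp only [hΦ]
    have h1 : Measurable fun p : Ω × ((Fin n → ℝ) × (Fin n → ℝ)) => X p.2.1 p.1 :=
      hXmeas.comp ((measurable_fst.comp measurable_snd).prodMk measurable_fst)
    have h2 : Measurable fun p : Ω × ((Fin n → ℝ) × (Fin n → ℝ)) => X p.2.2 p.1 :=
      hXmeas.comp ((measurable_snd.comp measurable_snd).prodMk measurable_fst)
    exact ((hqmeas.comp (measurable_fst.comp measurable_snd)).mul h1).mul
      ((hqmeas.comp (measurable_snd.comp measurable_snd)).mul h2)
  have hslice : ∀ z, Integrable (fun ω => Φ ω z) P := by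
    intro z
    by_cases h1 : q z.1 = 0
    · have he : (fun ω => Φ ω z) = fun _ => (0:ℝ) := by
        funext ω; simp only [hΦ]; rw [h1]; ring
      rw [he]; exact integrable_const 0
    by_cases h2 : q z.2 = 0
    · have he : (fun ω => Φ ω z) = fun _ => (0:ℝ) := by
        funext ω; simp only [hΦ]; rw [h2]; ring
      rw [he]; exact integrable_const 0
    have he : (fun ω => Φ ω z) = fun ω => (q z.1 * q z.2) * (X z.1 ω * X z.2 ω) := by
      funext ω; simp only [hΦ]; ring
    rw [he]
    exact ((moment z h1 h2).1).const_mul _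
  have hΦnorm : ∀ z, (∫ ω, ‖Φ ω z‖ ∂P) ≤ |q z.1| * |q z.2| * C := by
    intro z
    have hre : (fun ω => ‖Φ ω z‖) = fun ω => |q z.1 * q z.2| * |X z.1 ω * X z.2 ω| := by
      funext ω
      simp only [hΦ]
      rw [Real.norm_eq_abs, mul_mul_mul_comm, abs_mul]
    rw [hre, integral_const_mul]
    by_cases h1 : q z.1 = 0
    · have hz : |q z.1 * q z.2| * ∫ ω, |X z.1 ω * X z.2 ω| ∂P = 0 := by rw [h1]; simp
      rw [hz]; positivity
    by_cases h2 : q z.2 = 0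
    · have hz : |q z.1 * q z.2| * ∫ ω, |X z.1 ω * X z.2 ω| ∂P = 0 := by rw [h2]; simp
      rw [hz]; positivity
    calc |q z.1 * q z.2| * ∫ ω, |X z.1 ω * X z.2 ω| ∂P ≤ |q z.1 * q z.2| * C :=
        mul_le_mul_of_nonneg_left ((moment z h1 h2).2.2) (abs_nonneg _)
      _ = |q z.1| * |q z.2| * C := by rw [abs_mul]
  have hΦint : Integrable (fun p : Ω × ((Fin n → ℝ) × (Fin n → ℝ)) => Φ p.1 p.2)
      (P.prod ((volume.restrict A).prod (volume.restrict A))) := by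
    refine (integrable_prod_iff' hΦmeas.aestronglyMeasurable).mpr ⟨?_, ?_⟩
    · filter_upwards with z
      exact hslice z
    · refine Integrable.mono' (hqq.mul_const C)
        (hΦmeas.norm.stronglyMeasurable.integral_prod_left').aestronglyMeasurable ?_
      filter_upwards with z
      rw [Real.norm_eq_abs, abs_of_nonneg (integral_nonneg fun ω => norm_nonneg _)]
      exact hΦnorm z
  -- pointwise bound on the ω-integral
  have hpt : ∀ z, (∫ ω, Φ ω z ∂P) ≤ |q z.1| * |q z.2| * S z := by
    intro z
    by_cases h1 : q z.1 = 0
    · have he : (fun ω => Φ ω z) = fun _ => (0:ℝ) := by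
        funext ω; simp only [hΦ]; rw [h1]; ring
      rw [he, integral_const, smul_zero]
      have := hS0 z
      positivity
    by_cases h2 : q z.2 = 0
    · have he : (fun ω => Φ ω z) = fun _ => (0:ℝ) := by
        funext ω; simp only [hΦ]; rw [h2]; ring
      rw [he, integral_const, smul_zero]
      have := hS0 z
      positivity
    obtain ⟨hE0, hES⟩ := (moment z h1 h2).2.1
    have hre : (∫ ω, Φ ω z ∂P) = (q z.1 * q z.2) * ∫ ω, X z.1 ω * X z.2 ω ∂P := by
      calc ∫ ω, Φ ω z ∂P = ∫ ω, (q z.1 * q z.2) * (X z.1 ω * X z.2 ω) ∂P := by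
            refine integral_congr_ae (Filter.Eventually.of_forall fun ω => ?_)
            simp only [hΦ]; ring
        _ = (q z.1 * q z.2) * ∫ ω, X z.1 ω * X z.2 ω ∂P := integral_const_mul _ _
    rw [hre]
    calc (q z.1 * q z.2) * ∫ ω, X z.1 ω * X z.2 ω ∂P
        ≤ |q z.1 * q z.2| * ∫ ω, X z.1 ω * X z.2 ω ∂P :=
          mul_le_mul_of_nonneg_right (le_abs_self _) hE0
      _ ≤ |q z.1 * q z.2| * S z := mul_le_mul_of_nonneg_left hES (abs_nonneg _)
      _ = |q z.1| * |q z.2| * S z := by rw [abs_mul]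
  have hint2 : Integrable (fun z => |q z.1| * |q z.2| * S z)
      ((volume.restrict A).prod (volume.restrict A)) := by
    refine Integrable.mono' (hqq.mul_const (n.factorial : ℝ))
      ((((hqmeas.comp measurable_fst).abs.mul
        (hqmeas.comp measurable_snd).abs).mul hSmeas).aestronglyMeasurable) ?_
    filter_upwards with z
    rw [Real.norm_eq_abs, abs_of_nonneg
      (mul_nonneg (mul_nonneg (abs_nonneg _) (abs_nonneg _)) (hS0 z))]
    exact mul_le_mul_of_nonneg_left (hSle z) (by positivity)
  -- rewrite the inner integral
  have hrw : ∀ ω, (∫ x in A, f x * ∏ i, θ (x i) ω *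
      ∏ j ∈ Finset.univ.erase i, if ε < |x i - x j| then (1:ℝ) else 0)
      = ∫ x in A, q x * X x ω := by
    intro ω
    refine setIntegral_congr_fun hAm fun x hxA => ?_
    simp only [hX, hqmem x hxA, hθ, hh]
    rw [Finset.prod_mul_distrib, Finset.prod_mul_distrib, Finset.prod_const,
      Finset.card_univ, Fintype.card_fin]
    ring
  have key : ∀ ω, (∫ x in A, q x * X x ω) ^ 2 =
      ∫ z, Φ ω z ∂((volume.restrict A).prod (volume.restrict A)) := by
    intro ω
    rw [sq, ← integral_prod_mul (μ := volume.restrict A) (ν := volume.restrict A)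
      (f := fun x => q x * X x ω) (g := fun y => q y * X y ω)]
    refine integral_congr_ae (Filter.Eventually.of_forall fun z => ?_)
    simp only [hΦ]
  have hswap : ∫ ω, (∫ z, Φ ω z ∂((volume.restrict A).prod (volume.restrict A))) ∂P =
      ∫ z, (∫ ω, Φ ω z ∂P) ∂((volume.restrict A).prod (volume.restrict A)) :=
    integral_integral_swap (f := Φ) hΦint
  have hint1 : Integrable (fun z => ∫ ω, Φ ω z ∂P)
      ((volume.restrict A).prod (volume.restrict A)) := hΦint.integral_prod_right
  -- per-permutation analysis
  have hPrmeas : ∀ σ : Equiv.Perm (Fin n), Measurable fun z : (Fin n → ℝ) × (Fin n → ℝ) =>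
      ∏ i, (if ⌊z.1 i / ε ^ 2⌋₊ = ⌊z.2 (σ i) / ε ^ 2⌋₊ then (1:ℝ) else 0) := by
    intro σ
    refine Finset.measurable_prod _ fun i _ => ?_
    refine Measurable.ite ?_ measurable_const measurable_const
    exact measurableSet_eq_fun
      (hKmeas.comp ((measurable_pi_apply i).comp measurable_fst))
      (hKmeas.comp ((measurable_pi_apply (σ i)).comp measurable_snd))
  have hPr0 : ∀ (σ : Equiv.Perm (Fin n)) (z : (Fin n → ℝ) × (Fin n → ℝ)),
      0 ≤ ∏ i, (if ⌊z.1 i / ε ^ 2⌋₊ = ⌊z.2 (σ i) / ε ^ 2⌋₊ then (1:ℝ) else 0) :=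
    fun σ z => Finset.prod_nonneg fun i _ => by positivity
  have hPr1 : ∀ (σ : Equiv.Perm (Fin n)) (z : (Fin n → ℝ) × (Fin n → ℝ)),
      (∏ i, (if ⌊z.1 i / ε ^ 2⌋₊ = ⌊z.2 (σ i) / ε ^ 2⌋₊ then (1:ℝ) else 0)) ≤ 1 :=
    fun σ z => Finset.prod_le_one (fun i _ => by positivity)
      (fun i _ => by split <;> norm_num)
  have hWint : ∀ σ : Equiv.Perm (Fin n),
      Integrable (fun z : (Fin n → ℝ) × (Fin n → ℝ) => |q z.1| * |q z.2| *
        ∏ i, (if ⌊z.1 i / ε ^ 2⌋₊ = ⌊z.2 (σ i) / ε ^ 2⌋₊ then (1:ℝ) else 0))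
        ((volume.restrict A).prod (volume.restrict A)) := by
    intro σ
    refine Integrable.mono' hqq
      (((hqmeas.comp measurable_fst).abs.mul
        (hqmeas.comp measurable_snd).abs).mul (hPrmeas σ)).aestronglyMeasurable ?_
    filter_upwards with z
    rw [Real.norm_eq_abs, abs_of_nonneg
      (mul_nonneg (mul_nonneg (abs_nonneg _) (abs_nonneg _)) (hPr0 σ z))]
    calc |q z.1| * |q z.2| * ∏ i, (if ⌊z.1 i / ε ^ 2⌋₊ = ⌊z.2 (σ i) / ε ^ 2⌋₊ then (1:ℝ) else 0)
        ≤ |q z.1| * |q z.2| * 1 := mul_le_mul_of_nonneg_left (hPr1 σ z) (by positivity)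
      _ = |q z.1| * |q z.2| := mul_one _
  have hWσ : ∀ σ : Equiv.Perm (Fin n),
      (∫ z, |q z.1| * |q z.2| *
          ∏ i, (if ⌊z.1 i / ε ^ 2⌋₊ = ⌊z.2 (σ i) / ε ^ 2⌋₊ then (1:ℝ) else 0)
        ∂((volume.restrict A).prod (volume.restrict A)))
      ≤ (ε ^ 2) ^ n * ∫ x in A, q x ^ 2 := by
    intro σ
    have hT1int : Integrable (fun z : (Fin n → ℝ) × (Fin n → ℝ) =>
        q z.1 ^ 2 * ∏ i, (if ⌊z.1 i / ε ^ 2⌋₊ = ⌊z.2 (σ i) / ε ^ 2⌋₊ then (1:ℝ) else 0))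
        ((volume.restrict A).prod (volume.restrict A)) := by
      refine Integrable.mono' (hfst hq2int)
        (((hqmeas.comp measurable_fst).pow_const 2).mul (hPrmeas σ)).aestronglyMeasurable ?_
      filter_upwards with z
      rw [Real.norm_eq_abs, abs_of_nonneg (mul_nonneg (sq_nonneg _) (hPr0 σ z))]
      calc q z.1 ^ 2 * ∏ i, (if ⌊z.1 i / ε ^ 2⌋₊ = ⌊z.2 (σ i) / ε ^ 2⌋₊ then (1:ℝ) else 0)
          ≤ q z.1 ^ 2 * 1 := mul_le_mul_of_nonneg_left (hPr1 σ z) (sq_nonneg _)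
        _ = q z.1 ^ 2 := mul_one _
    have hT2int : Integrable (fun z : (Fin n → ℝ) × (Fin n → ℝ) =>
        q z.2 ^ 2 * ∏ i, (if ⌊z.1 i / ε ^ 2⌋₊ = ⌊z.2 (σ i) / ε ^ 2⌋₊ then (1:ℝ) else 0))
        ((volume.restrict A).prod (volume.restrict A)) := by
      refine Integrable.mono' (hsnd hq2int)
        (((hqmeas.comp measurable_snd).pow_const 2).mul (hPrmeas σ)).aestronglyMeasurable ?_
      filter_upwards with z
      rw [Real.norm_eq_abs, abs_of_nonneg (mul_nonneg (sq_nonneg _) (hPr0 σ z))]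
      calc q z.2 ^ 2 * ∏ i, (if ⌊z.1 i / ε ^ 2⌋₊ = ⌊z.2 (σ i) / ε ^ 2⌋₊ then (1:ℝ) else 0)
          ≤ q z.2 ^ 2 * 1 := mul_le_mul_of_nonneg_left (hPr1 σ z) (sq_nonneg _)
        _ = q z.2 ^ 2 := mul_one _
    have hIy : ∀ x : Fin n → ℝ,
        0 ≤ (∫ y, ∏ i, (if ⌊x i / ε ^ 2⌋₊ = ⌊y (σ i) / ε ^ 2⌋₊ then (1:ℝ) else 0)
            ∂(volume.restrict A)) ∧
        (∫ y, ∏ i, (if ⌊x i / ε ^ 2⌋₊ = ⌊y (σ i) / ε ^ 2⌋₊ then (1:ℝ) else 0)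
            ∂(volume.restrict A)) ≤ (ε ^ 2) ^ n := by
      intro x
      have hre : ∀ y : Fin n → ℝ,
          (∏ i, (if ⌊x i / ε ^ 2⌋₊ = ⌊y (σ i) / ε ^ 2⌋₊ then (1:ℝ) else 0)) =
          ∏ j, (if ⌊y j / ε ^ 2⌋₊ = ⌊x (σ.symm j) / ε ^ 2⌋₊ then (1:ℝ) else 0) := by
        intro y
        rw [← Equiv.prod_comp σ
          (fun j => (if ⌊y j / ε ^ 2⌋₊ = ⌊x (σ.symm j) / ε ^ 2⌋₊ then (1:ℝ) else 0))]
        refine Finset.prod_congr rfl fun i _ => ?_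
        rw [Equiv.symm_apply_apply]
        exact if_congr eq_comm rfl rfl
      have heq : (∫ y, ∏ i, (if ⌊x i / ε ^ 2⌋₊ = ⌊y (σ i) / ε ^ 2⌋₊ then (1:ℝ) else 0)
            ∂(volume.restrict A)) =
          ∏ j, ∫ s in Set.Icc (0:ℝ) t,
            (if ⌊s / ε ^ 2⌋₊ = ⌊x (σ.symm j) / ε ^ 2⌋₊ then (1:ℝ) else 0) := by
        rw [integral_congr_ae (Filter.Eventually.of_forall hre), hA]
        exact aux_pi_integral measurableSet_Icc _ fun j =>
          Measurable.ite (hKmeas (measurableSet_singleton _)) measurable_const measurable_const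
      rw [heq]
      constructor
      · exact Finset.prod_nonneg fun j _ => (aux_interval_integral hc0 _).1
      · calc (∏ j, ∫ s in Set.Icc (0:ℝ) t,
              (if ⌊s / ε ^ 2⌋₊ = ⌊x (σ.symm j) / ε ^ 2⌋₊ then (1:ℝ) else 0))
            ≤ ∏ _j : Fin n, ε ^ 2 :=
              Finset.prod_le_prod (fun j _ => (aux_interval_integral hc0 _).1)
                (fun j _ => (aux_interval_integral hc0 _).2)
          _ = (ε ^ 2) ^ n := by rw [Finset.prod_const, Finset.card_univ, Fintype.card_fin]
    have hIx : ∀ y : Fin n → ℝ,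
        0 ≤ (∫ x, ∏ i, (if ⌊x i / ε ^ 2⌋₊ = ⌊y (σ i) / ε ^ 2⌋₊ then (1:ℝ) else 0)
            ∂(volume.restrict A)) ∧
        (∫ x, ∏ i, (if ⌊x i / ε ^ 2⌋₊ = ⌊y (σ i) / ε ^ 2⌋₊ then (1:ℝ) else 0)
            ∂(volume.restrict A)) ≤ (ε ^ 2) ^ n := by
      intro y
      have heq : (∫ x, ∏ i, (if ⌊x i / ε ^ 2⌋₊ = ⌊y (σ i) / ε ^ 2⌋₊ then (1:ℝ) else 0)
            ∂(volume.restrict A)) =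
          ∏ i, ∫ s in Set.Icc (0:ℝ) t,
            (if ⌊s / ε ^ 2⌋₊ = ⌊y (σ i) / ε ^ 2⌋₊ then (1:ℝ) else 0) := by
        rw [hA]
        exact aux_pi_integral measurableSet_Icc _ fun i =>
          Measurable.ite (hKmeas (measurableSet_singleton _)) measurable_const measurable_const
      rw [heq]
      constructor
      · exact Finset.prod_nonneg fun i _ => (aux_interval_integral hc0 _).1
      · calc (∏ i, ∫ s in Set.Icc (0:ℝ) t,
              (if ⌊s / ε ^ 2⌋₊ = ⌊y (σ i) / ε ^ 2⌋₊ then (1:ℝ) else 0))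
            ≤ ∏ _j : Fin n, ε ^ 2 :=
              Finset.prod_le_prod (fun i _ => (aux_interval_integral hc0 _).1)
                (fun i _ => (aux_interval_integral hc0 _).2)
          _ = (ε ^ 2) ^ n := by rw [Finset.prod_const, Finset.card_univ, Fintype.card_fin]
    have hT1 : (∫ z, q z.1 ^ 2 *
          ∏ i, (if ⌊z.1 i / ε ^ 2⌋₊ = ⌊z.2 (σ i) / ε ^ 2⌋₊ then (1:ℝ) else 0)
          ∂((volume.restrict A).prod (volume.restrict A)))
        ≤ (ε ^ 2) ^ n * ∫ x in A, q x ^ 2 := by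
      rw [integral_prod _ hT1int]
      calc (∫ x, (∫ y, q x ^ 2 *
              ∏ i, (if ⌊x i / ε ^ 2⌋₊ = ⌊y (σ i) / ε ^ 2⌋₊ then (1:ℝ) else 0)
              ∂(volume.restrict A)) ∂(volume.restrict A))
          ≤ ∫ x, q x ^ 2 * (ε ^ 2) ^ n ∂(volume.restrict A) := by
            refine integral_mono hT1int.integral_prod_left (hq2int.mul_const _) fun x => ?_
            rw [integral_const_mul]
            exact mul_le_mul_of_nonneg_left (hIy x).2 (sq_nonneg _)
        _ = (ε ^ 2) ^ n * ∫ x in A, q x ^ 2 := by rw [integral_mul_const]; ring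
    have hT2 : (∫ z, q z.2 ^ 2 *
          ∏ i, (if ⌊z.1 i / ε ^ 2⌋₊ = ⌊z.2 (σ i) / ε ^ 2⌋₊ then (1:ℝ) else 0)
          ∂((volume.restrict A).prod (volume.restrict A)))
        ≤ (ε ^ 2) ^ n * ∫ x in A, q x ^ 2 := by
      rw [integral_prod_symm _ hT2int]
      calc (∫ y, (∫ x, q y ^ 2 *
              ∏ i, (if ⌊x i / ε ^ 2⌋₊ = ⌊y (σ i) / ε ^ 2⌋₊ then (1:ℝ) else 0)
              ∂(volume.restrict A)) ∂(volume.restrict A))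
          ≤ ∫ y, q y ^ 2 * (ε ^ 2) ^ n ∂(volume.restrict A) := by
            refine integral_mono hT2int.integral_prod_right (hq2int.mul_const _) fun y => ?_
            rw [integral_const_mul]
            exact mul_le_mul_of_nonneg_left (hIx y).2 (sq_nonneg _)
        _ = (ε ^ 2) ^ n * ∫ x in A, q x ^ 2 := by rw [integral_mul_const]; ring
    calc (∫ z, |q z.1| * |q z.2| *
          ∏ i, (if ⌊z.1 i / ε ^ 2⌋₊ = ⌊z.2 (σ i) / ε ^ 2⌋₊ then (1:ℝ) else 0)
          ∂((volume.restrict A).prod (volume.restrict A)))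
        ≤ ∫ z, (q z.1 ^ 2 *
            ∏ i, (if ⌊z.1 i / ε ^ 2⌋₊ = ⌊z.2 (σ i) / ε ^ 2⌋₊ then (1:ℝ) else 0) +
          q z.2 ^ 2 *
            ∏ i, (if ⌊z.1 i / ε ^ 2⌋₊ = ⌊z.2 (σ i) / ε ^ 2⌋₊ then (1:ℝ) else 0)) / 2
          ∂((volume.restrict A).prod (volume.restrict A)) := by
          refine integral_mono (hWint σ) ((hT1int.add hT2int).div_const 2) fun z => ?_
          have h1 : |q z.1| * |q z.2| ≤ (q z.1 ^ 2 + q z.2 ^ 2) / 2 := by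
            nlinarith [sq_nonneg (|q z.1| - |q z.2|), sq_abs (q z.1), sq_abs (q z.2)]
          nlinarith [mul_le_mul_of_nonneg_right h1 (hPr0 σ z)]
      _ = ((∫ z, q z.1 ^ 2 *
            ∏ i, (if ⌊z.1 i / ε ^ 2⌋₊ = ⌊z.2 (σ i) / ε ^ 2⌋₊ then (1:ℝ) else 0)
            ∂((volume.restrict A).prod (volume.restrict A))) +
          (∫ z, q z.2 ^ 2 *
            ∏ i, (if ⌊z.1 i / ε ^ 2⌋₊ = ⌊z.2 (σ i) / ε ^ 2⌋₊ then (1:ℝ) else 0)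
            ∂((volume.restrict A).prod (volume.restrict A)))) / 2 := by
          rw [integral_div, integral_add hT1int hT2int]
      _ ≤ (((ε ^ 2) ^ n * ∫ x in A, q x ^ 2) + ((ε ^ 2) ^ n * ∫ x in A, q x ^ 2)) / 2 := by
          have := hT1; have := hT2; linarith
      _ = (ε ^ 2) ^ n * ∫ x in A, q x ^ 2 := by ring
  -- the final comparison of the L² masses
  have hq2f : (ε ^ 2) ^ n * ∫ x in A, q x ^ 2 ≤ ∫ x in A', f x ^ 2 := by
    have hcc : ((ε:ℝ) ^ 2) ^ n * (ε⁻¹ ^ n) ^ 2 = 1 := by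
      rw [← pow_mul, ← pow_mul, mul_comm n 2, ← mul_pow, mul_inv_cancel₀ (ne_of_gt hε0), one_pow]
    have step2 : ∫ x in A, (ε ^ 2) ^ n * q x ^ 2 ≤ ∫ x in A, f x ^ 2 := by
      refine setIntegral_mono_on (hq2int.const_mul _) hf2A hAm fun x hxA => ?_
      rw [hqmem x hxA]
      have hexp : (ε ^ 2) ^ n * (f x * h x * ε⁻¹ ^ n) ^ 2
          = f x ^ 2 * h x ^ 2 * ((ε ^ 2) ^ n * (ε⁻¹ ^ n) ^ 2) := by ring
      rw [hexp, hcc, mul_one]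
      have hh2 : h x ^ 2 ≤ 1 := by nlinarith [hh0 x, hh1 x]
      nlinarith [mul_nonneg (sq_nonneg (f x)) (sub_nonneg.mpr hh2)]
    have step3 : ∫ x in A, f x ^ 2 ≤ ∫ x in A', f x ^ 2 :=
      setIntegral_mono_set hfL2 (Filter.Eventually.of_forall fun x => sq_nonneg _)
        (HasSubset.Subset.eventuallyLE hAA')
    calc (ε ^ 2) ^ n * ∫ x in A, q x ^ 2 = ∫ x in A, (ε ^ 2) ^ n * q x ^ 2 :=
        (integral_const_mul _ _).symm
      _ ≤ ∫ x in A, f x ^ 2 := step2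
      _ ≤ ∫ x in A', f x ^ 2 := step3
  -- assemble everything
  calc ∫ ω, (∫ x in A, f x * ∏ i, θ (x i) ω * ∏ j ∈ Finset.univ.erase i,
          if ε < |x i - x j| then (1:ℝ) else 0) ^ 2 ∂P
      = ∫ ω, (∫ x in A, q x * X x ω) ^ 2 ∂P := by
        refine integral_congr_ae (Filter.Eventually.of_forall fun ω => ?_)
        exact congrArg (fun r : ℝ => r ^ 2) (hrw ω)
    _ = ∫ ω, (∫ z, Φ ω z ∂((volume.restrict A).prod (volume.restrict A))) ∂P := by
        refine integral_congr_ae (Filter.Eventually.of_forall fun ω => ?_)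
        exact key ω
    _ = ∫ z, (∫ ω, Φ ω z ∂P) ∂((volume.restrict A).prod (volume.restrict A)) := hswap
    _ ≤ ∫ z, |q z.1| * |q z.2| * S z ∂((volume.restrict A).prod (volume.restrict A)) :=
        integral_mono hint1 hint2 fun z => hpt z
    _ = ∑ σ : Equiv.Perm (Fin n), ∫ z, |q z.1| * |q z.2| *
          ∏ i, (if ⌊z.1 i / ε ^ 2⌋₊ = ⌊z.2 (σ i) / ε ^ 2⌋₊ then (1:ℝ) else 0)
          ∂((volume.restrict A).prod (volume.restrict A)) := by
        rw [← integral_finset_sum _ (fun σ _ => hWint σ)]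
        refine integral_congr_ae (Filter.Eventually.of_forall fun z => ?_)
        simp only [hS]
        rw [Finset.mul_sum]
    _ ≤ ∑ _σ : Equiv.Perm (Fin n), (ε ^ 2) ^ n * ∫ x in A, q x ^ 2 :=
        Finset.sum_le_sum fun σ _ => hWσ σ
    _ = (n.factorial : ℝ) * ((ε ^ 2) ^ n * ∫ x in A, q x ^ 2) := by
        rw [Finset.sum_const, Finset.card_univ, Fintype.card_perm, Fintype.card_fin,
          nsmul_eq_mul]
    _ ≤ (n.factorial : ℝ) * ∫ x in A', f x ^ 2 :=
        mul_le_mul_of_nonneg_left hq2f (by positivity)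
end

section
/- Let (η_ε)_{ε>0} be processes of the form η_ε(t) = ∫₀ᵗ θ_ε(s) ds with θ_ε ∈ L²([0,T]) a.s., whose finite dimensional distributions converge to those of a standard Brownian motion W as ε → 0. Let f ∈ E'ⁿ be a simple function f = ∑_{k=1}^m α_k 1_{Δ_k}, where each Δ_k = (a_k¹,b_k¹] × ⋯ × (a_kⁿ,b_kⁿ] is a product of pairwise disjoint intervals. Define Y_ε^f(t) = ∫_{[0,t]ⁿ} f(x) ∏ᵢ θ_ε(xᵢ) ∏_{i≠j} 1_{|x_i - x_j| > ε} dx. Then the finite dimensional distributions of Y_ε^f converge, as ε → 0, to those of the multiple Wiener-Itô integral t ↦ I_n(f · 1_{[0,t]ⁿ}); explicitly, for such f, the limit at time t equals ∑_{k=1}^m α_k ∏_{i=1}^n (W(b_kⁱ ∧ t) - W(a_kⁱ ∧ t)). -/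
open MeasureTheory ProbabilityTheory Filter Topology BoundedContinuousFunction

/-- Let `η_ε(t) = ∫₀ᵗ θ_ε(s) ds` have paths in the Cameron–Martin space and suppose
the finite dimensional distributions of `η_ε` converge to those of a standard Brownian
motion `W`.  Let `f = Σ_k α_k 1_{Δ_k}` be a simple function whose rectangles
`Δ_k = (a_k¹,b_k¹] × ⋯ × (a_kⁿ,b_kⁿ]` are products of pairwise disjoint intervals, and
`Y_ε^f(t) = ∫_{[0,t]ⁿ} f(x) ∏ᵢ θ_ε(xᵢ) ∏_{i≠j} 1_{|x_i-x_j|>ε} dx`.  Then the finite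
dimensional distributions of `Y_ε^f` converge, as `ε → 0`, to those of the multiple
Wiener–Itô integral `t ↦ I_n(f·1_{[0,t]ⁿ})`, which for such `f` equals
`Σ_k α_k ∏ᵢ (W(b_kⁱ ∧ t) − W(a_kⁱ ∧ t))`. -/
theorem stmt_8 {Ω : Type*} [MeasurableSpace Ω] (P : Measure Ω) [IsProbabilityMeasure P]
    (T : ℝ) (hT : 0 ≤ T)
    (W : ℝ → Ω → ℝ) (hWmeas : ∀ t, Measurable (W t))
    (hW0 : ∀ ω, W 0 ω = 0) (hWcont : ∀ ω, Continuous fun t => W t ω)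
    (hWgauss : ∀ s t : ℝ, 0 ≤ s → s ≤ t →
      Measure.map (fun ω => W t ω - W s ω) P = gaussianReal 0 (Real.toNNReal (t - s)))
    (hWindep : ∀ (m : ℕ) (u : Fin (m + 1) → ℝ), Monotone u →
      iIndepFun
        (fun i : Fin m => fun ω => W (u i.succ) ω - W (u i.castSucc) ω) P)
    (θ : ℝ → ℝ → Ω → ℝ) (hθmeas : ∀ ε, Measurable fun p : ℝ × Ω => θ ε p.1 p.2)
    (hθL2 : ∀ ε > (0 : ℝ), ∀ ω, MemLp (fun s => θ ε s ω) 2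
      (MeasureTheory.volume.restrict (Set.Icc 0 T)))
    (η : ℝ → ℝ → Ω → ℝ) (hη : ∀ ε t ω, η ε t ω = ∫ s in (0 : ℝ)..t, θ ε s ω)
    (hfdd : ∀ (r : ℕ) (ts : Fin r → ℝ), (∀ i, ts i ∈ Set.Icc (0 : ℝ) T) →
      ∀ g : BoundedContinuousFunction (Fin r → ℝ) ℝ,
      Tendsto (fun ε => ∫ ω, g (fun i => η ε (ts i) ω) ∂P) (𝓝[>] (0 : ℝ))
        (𝓝 (∫ ω, g (fun i => W (ts i) ω) ∂P)))
    (n m : ℕ) (α : Fin m → ℝ) (a b : Fin m → Fin n → ℝ)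
    (ha : ∀ k i, 0 ≤ a k i) (hab : ∀ k i, a k i ≤ b k i) (hbT : ∀ k i, b k i ≤ T)
    (hdisj : ∀ k, Pairwise fun i j =>
      Disjoint (Set.Icc (a k i) (b k i)) (Set.Icc (a k j) (b k j))) :
    ∀ (r : ℕ) (ts : Fin r → ℝ), (∀ i, ts i ∈ Set.Icc (0 : ℝ) T) →
      ∀ g : BoundedContinuousFunction (Fin r → ℝ) ℝ,
      Tendsto
        (fun ε => ∫ ω, g (fun i =>
          ∫ x in Set.univ.pi (fun _ : Fin n => Set.Icc (0 : ℝ) (ts i)),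
            (∑ k, α k * ∏ l, if x l ∈ Set.Ioc (a k l) (b k l) then (1 : ℝ) else 0) *
              ∏ l, θ ε (x l) ω *
                ∏ l' ∈ Finset.univ.erase l, if ε < |x l - x l'| then (1 : ℝ) else 0) ∂P)
        (𝓝[>] (0 : ℝ))
        (𝓝 (∫ ω, g (fun i =>
          ∑ k, α k * ∏ l, (W (min (b k l) (ts i)) ω - W (min (a k l) (ts i)) ω)) ∂P)) := by
  intro r ts hts g
  classical
  -- the minimal gap between the intervals of each rectangle
  set d : Fin m × Fin n × Fin n → ℝ :=
    fun p => max (a p.1 p.2.2 - b p.1 p.2.1) (a p.1 p.2.1 - b p.1 p.2.2) with hd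
  have hdpos : ∀ p : Fin m × Fin n × Fin n, p.2.1 ≠ p.2.2 → 0 < d p := by
    rintro ⟨k, l, l'⟩ hne
    simp only at hne
    by_contra hle
    push_neg at hle
    rw [hd] at hle
    simp only [max_le_iff, sub_nonpos] at hle
    exact (Set.not_disjoint_iff.mpr ⟨max (a k l) (a k l'),
      Set.mem_Icc.mpr ⟨le_max_left _ _, max_le (hab k l) hle.1⟩,
      Set.mem_Icc.mpr ⟨le_max_right _ _, max_le hle.2 (hab k l')⟩⟩) (hdisj k hne)
  set ε₀ : ℝ := if h : (Finset.univ : Finset (Fin m × Fin n × Fin n)).Nonempty then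
      Finset.univ.inf' h (fun p => if p.2.1 = p.2.2 then 1 else d p) else 1 with hε₀def
  have hε₀pos : 0 < ε₀ := by
    rw [hε₀def]
    split
    · next h =>
      rw [Finset.lt_inf'_iff]
      intro p _
      split
      · exact one_pos
      · exact hdpos p ‹_›
    · exact one_pos
  have hε₀le : ∀ p : Fin m × Fin n × Fin n, p.2.1 ≠ p.2.2 → ε₀ ≤ d p := by
    intro p hp
    have hS' : (Finset.univ : Finset (Fin m × Fin n × Fin n)).Nonempty := ⟨p, Finset.mem_univ p⟩
    rw [hε₀def, dif_pos hS']
    exact (Finset.inf'_le (fun q : Fin m × Fin n × Fin n => if q.2.1 = q.2.2 then 1 else d q)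
        (Finset.mem_univ p)).trans_eq (if_neg hp)
  have hgap : ∀ (k : Fin m) (l l' : Fin n), l ≠ l' → ∀ x y : ℝ,
      x ∈ Set.Ioc (a k l) (b k l) → y ∈ Set.Ioc (a k l') (b k l') → ε₀ < |x - y| := by
    intro k l l' hne x y hx hy
    obtain ⟨hax, hxb⟩ := hx
    obtain ⟨hay, hyb⟩ := hy
    have hle := hε₀le (k, l, l') hne
    rw [hd] at hle
    simp only at hle
    have hcase : b k l < a k l' ∨ b k l' < a k l := by
      by_contra hc
      push_neg at hc
      exact (Set.not_disjoint_iff.mpr ⟨max (a k l) (a k l'),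
        Set.mem_Icc.mpr ⟨le_max_left _ _, max_le (hab k l) hc.1⟩,
        Set.mem_Icc.mpr ⟨le_max_right _ _, max_le hc.2 (hab k l')⟩⟩) (hdisj k hne)
    rcases hcase with h | h
    · have hmax : max (a k l' - b k l) (a k l - b k l') = a k l' - b k l :=
        max_eq_left (by linarith [hab k l, hab k l'])
      rw [hmax] at hle
      have h1 : ε₀ < y - x := by linarith
      calc ε₀ < y - x := h1
        _ ≤ |x - y| := by rw [abs_sub_comm]; exact le_abs_self _
    · have hmax : max (a k l' - b k l) (a k l - b k l') = a k l - b k l' :=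
        max_eq_right (by linarith [hab k l, hab k l'])
      rw [hmax] at hle
      have h1 : ε₀ < x - y := by linarith
      exact lt_of_lt_of_le h1 (le_abs_self _)
  -- the main analytic identity
  have key : ∀ ε : ℝ, 0 < ε → ε < ε₀ → ∀ ω : Ω, ∀ t : ℝ, 0 ≤ t → t ≤ T →
      (∫ x in Set.univ.pi (fun _ : Fin n => Set.Icc (0 : ℝ) t),
        (∑ k, α k * ∏ l, if x l ∈ Set.Ioc (a k l) (b k l) then (1 : ℝ) else 0) *
          ∏ l, θ ε (x l) ω *
            ∏ l' ∈ Finset.univ.erase l, if ε < |x l - x l'| then (1 : ℝ) else 0)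
      = ∑ k, α k * ∏ l, (η ε (min (b k l) t) ω - η ε (min (a k l) t) ω) := by
    intro ε hε hεε₀ ω t ht0 htT
    haveI : Fact ((volume : Measure ℝ) (Set.Icc 0 T) < ⊤) :=
      ⟨by rw [Real.volume_Icc]; exact ENNReal.ofReal_lt_top⟩
    have hΘint : IntegrableOn (fun s => θ ε s ω) (Set.Icc 0 T) :=
      (hθL2 ε hε ω).integrable one_le_two
    set H : Fin m → Fin n → ℝ → ℝ := fun k l =>
      (Set.Icc 0 t ∩ Set.Ioc (a k l) (b k l)).indicator (fun s => θ ε s ω) with hH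
    have hsub : ∀ k l, Set.Icc (0:ℝ) t ∩ Set.Ioc (a k l) (b k l) ⊆ Set.Icc 0 T :=
      fun k l s hs => ⟨hs.1.1, hs.1.2.trans htT⟩
    have hmeas : ∀ k l, MeasurableSet (Set.Icc (0:ℝ) t ∩ Set.Ioc (a k l) (b k l)) :=
      fun k l => measurableSet_Icc.inter measurableSet_Ioc
    have hHint : ∀ k l, Integrable (H k l) :=
      fun k l => (integrable_indicator_iff (hmeas k l)).mpr (hΘint.mono_set (hsub k l))
    have hset : ∀ k l, Set.Icc (0:ℝ) t ∩ Set.Ioc (a k l) (b k l)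
        = Set.Ioc (min (a k l) t) (min (b k l) t) := by
      intro k l
      ext s
      simp only [Set.mem_inter_iff, Set.mem_Icc, Set.mem_Ioc, le_min_iff]
      constructor
      · rintro ⟨⟨h0s, hst⟩, has, hsb⟩
        exact ⟨lt_of_le_of_lt (min_le_left _ _) has, hsb, hst⟩
      · rintro ⟨h1, h2, h3⟩
        rcases le_total (a k l) t with h | h
        · rw [min_eq_left h] at h1
          exact ⟨⟨(ha k l).trans h1.le, h3⟩, h1, h2⟩
        · rw [min_eq_right h] at h1
          exact absurd h3 (not_le.mpr h1)
    have hHval : ∀ k l, (∫ s, H k l s) = η ε (min (b k l) t) ω - η ε (min (a k l) t) ω := by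
      intro k l
      have h0a : (0:ℝ) ≤ min (a k l) t := le_min (ha k l) ht0
      have h0b : (0:ℝ) ≤ min (b k l) t := le_min ((ha k l).trans (hab k l)) ht0
      have hbt : min (b k l) t ≤ T := (min_le_right _ _).trans htT
      have hat : min (a k l) t ≤ T := (min_le_right _ _).trans htT
      have hib : IntervalIntegrable (fun s => θ ε s ω) volume 0 (min (b k l) t) := by
        apply MeasureTheory.IntegrableOn.intervalIntegrable
        apply hΘint.mono_set
        rw [Set.uIcc_of_le h0b]
        exact Set.Icc_subset_Icc_right hbt
      have hia : IntervalIntegrable (fun s => θ ε s ω) volume 0 (min (a k l) t) := by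
        apply MeasureTheory.IntegrableOn.intervalIntegrable
        apply hΘint.mono_set
        rw [Set.uIcc_of_le h0a]
        exact Set.Icc_subset_Icc_right hat
      have hstep : (∫ s, H k l s)
          = ∫ s in Set.Ioc (min (a k l) t) (min (b k l) t), θ ε s ω := by
        simp only [hH]
        rw [integral_indicator (hmeas k l), hset k l]
      rw [hstep, hη, hη, intervalIntegral.integral_interval_sub_left hib hia,
        intervalIntegral.integral_of_le (min_le_min (hab k l) (le_refl t))]
    calc
      (∫ x in Set.univ.pi (fun _ : Fin n => Set.Icc (0 : ℝ) t),
        (∑ k, α k * ∏ l, if x l ∈ Set.Ioc (a k l) (b k l) then (1 : ℝ) else 0) *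
          ∏ l, θ ε (x l) ω *
            ∏ l' ∈ Finset.univ.erase l, if ε < |x l - x l'| then (1 : ℝ) else 0)
        = ∫ x in Set.univ.pi (fun _ : Fin n => Set.Icc (0 : ℝ) t),
            ∑ k, α k * ∏ l, (Set.Ioc (a k l) (b k l)).indicator (fun s => θ ε s ω) (x l) := by
          refine integral_congr_ae (Filter.Eventually.of_forall fun x => ?_)
          dsimp only
          rw [Finset.sum_mul]
          refine Finset.sum_congr rfl fun k _ => ?_
          by_cases hk : ∀ l, x l ∈ Set.Ioc (a k l) (b k l)
          · rw [Finset.prod_congr rfl fun l _ => if_pos (hk l), Finset.prod_const_one, mul_one]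
            congr 1
            refine Finset.prod_congr rfl fun l _ => ?_
            rw [Finset.prod_eq_one fun l' hl' => if_pos (lt_trans hεε₀
                (hgap k l l' (Ne.symm (Finset.mem_erase.mp hl').1) (x l) (x l')
                  (hk l) (hk l'))),
              mul_one, Set.indicator_of_mem (hk l)]
          · push_neg at hk
            obtain ⟨l₀, hl₀⟩ := hk
            rw [Finset.prod_eq_zero (f := fun l => if x l ∈ Set.Ioc (a k l) (b k l)
                then (1:ℝ) else 0) (Finset.mem_univ l₀) (if_neg hl₀), mul_zero, zero_mul,
              Finset.prod_eq_zero (f := fun l => (Set.Ioc (a k l) (b k l)).indicator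
                (fun s => θ ε s ω) (x l)) (Finset.mem_univ l₀)
                (Set.indicator_of_notMem hl₀ _), mul_zero]
      _ = ∫ x : Fin n → ℝ, ∑ k, α k * ∏ l, H k l (x l) := by
          rw [← integral_indicator (MeasurableSet.univ_pi fun _ => measurableSet_Icc)]
          refine integral_congr_ae (Filter.Eventually.of_forall fun x => ?_)
          dsimp only
          by_cases hx : x ∈ Set.univ.pi fun _ : Fin n => Set.Icc (0:ℝ) t
          · rw [Set.indicator_of_mem hx]
            refine Finset.sum_congr rfl fun k _ => ?_
            congr 1
            refine Finset.prod_congr rfl fun l _ => ?_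
            have hxl : x l ∈ Set.Icc (0:ℝ) t := hx l (Set.mem_univ l)
            simp only [hH]
            by_cases h2 : x l ∈ Set.Ioc (a k l) (b k l)
            · rw [Set.indicator_of_mem h2 (fun s => θ ε s ω)]
              exact (Set.indicator_of_mem (Set.mem_inter hxl h2) (fun s => θ ε s ω)).symm
            · rw [Set.indicator_of_notMem h2 (fun s => θ ε s ω)]
              exact (Set.indicator_of_notMem (fun hc => h2 hc.2) (fun s => θ ε s ω)).symm
          · rw [Set.indicator_of_notMem hx]
            have hx' : ∃ l₀, x l₀ ∉ Set.Icc (0:ℝ) t := by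
              by_contra hc
              push_neg at hc
              exact hx (fun l _ => hc l)
            obtain ⟨l₀, hl₀⟩ := hx'
            symm
            refine Finset.sum_eq_zero fun k _ => ?_
            rw [Finset.prod_eq_zero (f := fun l => H k l (x l)) (Finset.mem_univ l₀)
              (by simp only [hH]; exact Set.indicator_of_notMem (fun hc => hl₀ hc.1) (fun s => θ ε s ω)),
              mul_zero]
      _ = ∑ k, ∫ x : Fin n → ℝ, α k * ∏ l, H k l (x l) :=
          integral_finset_sum _ fun k _ =>
            (Integrable.fintype_prod fun l => hHint k l).const_mul (α k)
      _ = ∑ k, α k * ∏ l, ∫ s, H k l s := by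
          refine Finset.sum_congr rfl fun k _ => ?_
          rw [integral_const_mul, MeasureTheory.integral_fintype_prod_volume_eq_prod
            (fun l => H k l)]
      _ = ∑ k, α k * ∏ l, (η ε (min (b k l) t) ω - η ε (min (a k l) t) ω) := by
          refine Finset.sum_congr rfl fun k _ => ?_
          rw [Finset.prod_congr rfl fun l _ => hHval k l]
  -- the finite-dimensional-distribution argument
  set e := Fintype.equivFin (Fin r × Fin m × Fin n × Bool) with he
  set ts' : Fin (Fintype.card (Fin r × Fin m × Fin n × Bool)) → ℝ := fun j =>
    min (cond (e.symm j).2.2.2 (b (e.symm j).2.1 (e.symm j).2.2.1)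
      (a (e.symm j).2.1 (e.symm j).2.2.1)) (ts (e.symm j).1) with hts'def
  have hts'e : ∀ (i : Fin r) (k : Fin m) (l : Fin n) (u : Bool),
      ts' (e (i, k, l, u)) = min (cond u (b k l) (a k l)) (ts i) := by
    intro i k l u
    rw [hts'def]
    simp only [Equiv.symm_apply_apply]
  have hts' : ∀ j, ts' j ∈ Set.Icc (0:ℝ) T := by
    intro j
    obtain ⟨h0, h1⟩ := hts (e.symm j).1
    refine Set.mem_Icc.mpr ⟨le_min ?_ h0, le_trans (min_le_right _ _) h1⟩
    cases (e.symm j).2.2.2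
    · exact ha _ _
    · exact le_trans (ha _ _) (hab _ _)
  set F : C(Fin (Fintype.card (Fin r × Fin m × Fin n × Bool)) → ℝ, Fin r → ℝ) :=
    ⟨fun v i => ∑ k, α k * ∏ l, (v (e (i, k, l, true)) - v (e (i, k, l, false))),
     continuous_pi fun i => continuous_finset_sum _ fun k _ =>
       continuous_const.mul (continuous_finset_prod _ fun l _ =>
         (continuous_apply _).sub (continuous_apply _))⟩ with hF
  have hFapp : ∀ v : Fin (Fintype.card (Fin r × Fin m × Fin n × Bool)) → ℝ, ∀ i : Fin r,
      F v i = ∑ k, α k * ∏ l, (v (e (i, k, l, true)) - v (e (i, k, l, false))) :=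
    fun v i => rfl
  have main := hfdd _ ts' hts' (g.compContinuous F)
  have hlim : (∫ ω, (g.compContinuous F) (fun j => W (ts' j) ω) ∂P)
      = ∫ ω, g (fun i =>
          ∑ k, α k * ∏ l, (W (min (b k l) (ts i)) ω - W (min (a k l) (ts i)) ω)) ∂P := by
    refine integral_congr_ae (Filter.Eventually.of_forall fun ω => ?_)
    dsimp only
    rw [BoundedContinuousFunction.compContinuous_apply]
    congr 1
    funext i
    rw [hFapp]
    simp only [hts'e, Bool.cond_true, Bool.cond_false]
  rw [hlim] at main
  refine Filter.Tendsto.congr' ?_ main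
  refine Filter.eventuallyEq_of_mem (Ioo_mem_nhdsGT hε₀pos) fun ε hε => ?_
  refine integral_congr_ae (Filter.Eventually.of_forall fun ω => ?_)
  dsimp only
  rw [BoundedContinuousFunction.compContinuous_apply]
  congr 1
  funext i
  rw [hFapp]
  simp only [hts'e, Bool.cond_true, Bool.cond_false]
  exact (key ε hε.1 hε.2 ω (ts i) (hts i).1 (hts i).2).symm
end
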